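/- Let M be a smooth manifold, n ≥ 1, and let {·,·} be an affine Jacobi bracket on the trivial bundle M×ℝⁿ. Then: (a) the space of affine functions is closed under {·,·} and is a Lie algebra; (b) for every affine function a and every f ∈ C^∞(M,ℝ) there is a unique ρ⁺(a)(f) ∈ C^∞(M,ℝ) with ρ⁺(a)(f)∘π = {a, f∘π} − (f∘π)·{a,1}, and the map f ↦ ρ⁺(a)(f) is an ℝ-linear derivation of the ring C^∞(M,ℝ); (c) ρ⁺ is C^∞(M,ℝ)-linear in a, i.e. ρ⁺((f∘π)·a + b) = f·ρ⁺(a) + ρ⁺(b) for all affine a,b and f ∈ C^∞(M,ℝ); (d) the Leibniz rule {a, (f∘π)·b} = (f∘π)·{a,b} + (ρ⁺(a)(f)∘π)·b holds for all affine a,b and f ∈ C^∞(M,ℝ). (This is the Lie algebroid structure on the bundle A⁺ of fibrewise affine functionals induced by an affine Jacobi structure.) -/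

import Mathlib

open scoped Manifold

/-- A Jacobi bracket on the smooth functions (those satisfying the predicate `S`)
of a space `N`: an ℝ-bilinear antisymmetric bracket satisfying the Jacobi identity
and the generalized Leibniz rule. -/
structure JacobiBracket (N : Type*) (S : (N → ℝ) → Prop) where
  br : (N → ℝ) → (N → ℝ) → N → ℝ
  smooth_br : ∀ f g, S f → S g → S (br f g)
  add_left : ∀ f g h, S f → S g → S h → br (f + g) h = br f h + br g h
  smul_left : ∀ (c : ℝ) (f g : N → ℝ), S f → S g → br (c • f) g = c • br f g
  antisymm : ∀ f g, S f → S g → br f g = -br g f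
  jacobi : ∀ f g h, S f → S g → S h →
    br f (br g h) + br g (br h f) + br h (br f g) = 0
  leibniz : ∀ f g h, S f → S g → S h →
    br f (g * h) = br f g * h + g * br f h - g * h * br f 1

/-- A function on the trivial bundle `M × ℝⁿ` is fibrewise affine if on each fibre
it is an affine map `ℝⁿ → ℝ`. -/
def IsFibAffine {M : Type*} {n : ℕ} (F : M × (Fin n → ℝ) → ℝ) : Prop :=
  ∀ x : M, ∃ (μ : (Fin n → ℝ) →ₗ[ℝ] ℝ) (c : ℝ), ∀ v, F (x, v) = μ v + c

section

variable {EM : Type*} [NormedAddCommGroup EM] [NormedSpace ℝ EM] [FiniteDimensional ℝ EM]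
  {HM : Type*} [TopologicalSpace HM] (IM : ModelWithCorners ℝ EM HM)
  (M : Type*) [TopologicalSpace M] [ChartedSpace HM M] [IsManifold IM (⊤ : ℕ∞) M]
  (n : ℕ)

/-- Smooth real functions on the total space of the trivial bundle `M × ℝⁿ`. -/
def SmoothBdl : (M × (Fin n → ℝ) → ℝ) → Prop :=
  fun F => ContMDiff (IM.prod (𝓘(ℝ, Fin n → ℝ))) 𝓘(ℝ, ℝ) (⊤ : ℕ∞) F

/-- Basic functions on the trivial bundle `M × ℝⁿ`: pullbacks of smooth functions
on `M` by the projection. -/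
def IsBasic : (M × (Fin n → ℝ) → ℝ) → Prop :=
  fun F => ∃ f : M → ℝ, ContMDiff IM 𝓘(ℝ, ℝ) (⊤ : ℕ∞) f ∧ F = fun p => f p.1

end



set_option linter.unusedSectionVars false
set_option maxHeartbeats 1000000

namespace JacobiBracket
variable {N : Type*} {S : (N → ℝ) → Prop} (J' : JacobiBracket N S)

lemma one_one (h1 : S 1) : J'.br 1 1 = 0 := by
  have h := J'.antisymm 1 1 h1 h1
  funext p
  have := congrFun h p
  simp only [Pi.neg_apply, Pi.zero_apply] at this ⊢
  linarith

lemma add_right {f g h : N → ℝ} (hf : S f) (hg : S g) (hh : S h) (hgh : S (g + h)) :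
    J'.br f (g + h) = J'.br f g + J'.br f h := by
  rw [J'.antisymm f (g + h) hf hgh, J'.add_left g h f hg hh hf,
    J'.antisymm g f hg hf, J'.antisymm h f hh hf]
  abel

lemma smul_right (c : ℝ) {f g : N → ℝ} (hf : S f) (hg : S g) (hcg : S (c • g)) :
    J'.br f (c • g) = c • J'.br f g := by
  rw [J'.antisymm f (c • g) hf hcg, J'.smul_left c g f hg hf, J'.antisymm g f hg hf]
  ext p; simp; try ring

lemma mul_left' {u w h : N → ℝ} (hu : S u) (hw : S w) (hh : S h) (huw : S (u * w)) :
    J'.br (u * w) h = w * J'.br u h + u * J'.br w h + u * w * J'.br h 1 := by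
  rw [J'.antisymm (u * w) h huw hh, J'.leibniz h u w hh hu hw,
    J'.antisymm h u hh hu, J'.antisymm h w hh hw]
  ext p; simp; try ring

end JacobiBracket

section Helpers
variable {EM : Type*} [NormedAddCommGroup EM] [NormedSpace ℝ EM] [FiniteDimensional ℝ EM]
  {HM : Type*} [TopologicalSpace HM] {IM : ModelWithCorners ℝ EM HM}
  {M : Type*} [TopologicalSpace M] [ChartedSpace HM M] [IsManifold IM (⊤ : ℕ∞) M]
  {n : ℕ}

lemma sm_basic {f : M → ℝ} (hf : ContMDiff IM 𝓘(ℝ, ℝ) (⊤ : ℕ∞) f) :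
    SmoothBdl IM M n (fun p => f p.1) := hf.comp contMDiff_fst

lemma sm_one : SmoothBdl IM M n 1 := contMDiff_const

lemma sm_coord (i : Fin n) : SmoothBdl IM M n (fun p => p.2 i) :=
  (contMDiff_iff_contDiff.mpr (contDiff_apply ℝ ℝ i)).comp contMDiff_snd

lemma sm_mul {F G : M × (Fin n → ℝ) → ℝ} (hF : SmoothBdl IM M n F) (hG : SmoothBdl IM M n G) :
    SmoothBdl IM M n (F * G) := ContMDiff.mul hF hG

lemma sm_add {F G : M × (Fin n → ℝ) → ℝ} (hF : SmoothBdl IM M n F) (hG : SmoothBdl IM M n G) :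
    SmoothBdl IM M n (F + G) := ContMDiff.add hF hG

lemma sm_smul (c : ℝ) {F : M × (Fin n → ℝ) → ℝ} (hF : SmoothBdl IM M n F) :
    SmoothBdl IM M n (c • F) := ContMDiff.smul (contMDiff_const (I := IM.prod (𝓘(ℝ, Fin n → ℝ))) (I' := 𝓘(ℝ, ℝ))) hF

lemma aff_basic (f : M → ℝ) : IsFibAffine (fun p : M × (Fin n → ℝ) => f p.1) :=
  fun x => ⟨0, f x, by simp⟩

lemma aff_one : IsFibAffine (1 : M × (Fin n → ℝ) → ℝ) :=
  fun _ => ⟨0, 1, by simp⟩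

lemma aff_coord (i : Fin n) : IsFibAffine (fun p : M × (Fin n → ℝ) => p.2 i) :=
  fun x => ⟨LinearMap.proj i, 0, by simp⟩

lemma aff_basic_mul (f : M → ℝ) {a : M × (Fin n → ℝ) → ℝ} (ha : IsFibAffine a) :
    IsFibAffine ((fun p : M × (Fin n → ℝ) => f p.1) * a) := fun x => by
  obtain ⟨μ, c, h⟩ := ha x
  refine ⟨f x • μ, f x * c, fun v => ?_⟩
  simp [h v]; ring

variable (hn : 1 ≤ n) (J : JacobiBracket (M × (Fin n → ℝ)) (SmoothBdl IM M n))
  (haff : ∀ a b, SmoothBdl IM M n a → SmoothBdl IM M n b →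
      IsFibAffine a → IsFibAffine b → IsFibAffine (J.br a b))

include hn haff in
lemma key {a : M × (Fin n → ℝ) → ℝ} {f : M → ℝ} (ha : SmoothBdl IM M n a)
    (haa : IsFibAffine a) (hf : ContMDiff IM 𝓘(ℝ, ℝ) (⊤ : ℕ∞) f) (x : M) (v : Fin n → ℝ) :
    J.br a (fun q => f q.1) (x, v) - f x * J.br a 1 (x, v)
      = J.br a (fun q => f q.1) (x, 0) - f x * J.br a 1 (x, 0) := by
  obtain ⟨μA, cA, hA⟩ := haff a _ ha (sm_basic hf) haa (aff_basic f) x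
  obtain ⟨μB, cB, hB⟩ := haff a 1 ha sm_one haa aff_one x
  have hstep : ∀ (i : Fin n) (w : Fin n → ℝ), (μA w - f x * μB w) * w i = 0 := by
    intro i w
    obtain ⟨μD, cD, hD⟩ := haff a (fun q => q.2 i) ha (sm_coord i) haa (aff_coord i) x
    obtain ⟨μC, cC, hC⟩ := haff a ((fun q => f q.1) * fun q => q.2 i)
      ha (sm_mul (sm_basic hf) (sm_coord i)) haa (aff_basic_mul f (aff_coord i)) x
    have hl := J.leibniz a (fun q => f q.1) (fun q => q.2 i) ha (sm_basic hf) (sm_coord i)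
    have e0 := congrFun hl (x, 0)
    have e1 := congrFun hl (x, w)
    have e2 := congrFun hl (x, (2 : ℝ) • w)
    simp only [Pi.mul_apply, Pi.add_apply, Pi.sub_apply] at e0 e1 e2
    rw [hA, hB, hC, hD] at e0 e1 e2
    simp only [map_smul, map_zero, smul_eq_mul, Pi.smul_apply, Pi.zero_apply] at e0 e1 e2
    linear_combination (2 * e1 - e2 - e0) / 2
  have hmu : ∀ w : Fin n → ℝ, μA w - f x * μB w = 0 := by
    intro w
    set i0 : Fin n := ⟨0, hn⟩ with hi0
    have single : ∀ u : Fin n → ℝ, u i0 ≠ 0 → μA u - f x * μB u = 0 := by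
      intro u hu
      rcases mul_eq_zero.1 (hstep i0 u) with h | h
      · exact h
      · exact absurd h hu
    by_cases h0 : w i0 = 0
    · have h1 : μA (w + Pi.single i0 1) - f x * μB (w + Pi.single i0 1) = 0 := by
        apply single
        simp [h0]
      have h2 : μA (Pi.single i0 (1 : ℝ)) - f x * μB (Pi.single i0 1) = 0 := by
        apply single
        simp
      rw [map_add, map_add] at h1
      linarith
    · exact single w h0
  have h1 := hA v
  have h2 := hB v
  have h3 := hA 0
  have h4 := hB 0
  rw [map_zero] at h3 h4
  rw [h1, h2, h3, h4]
  have := hmu v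
  linarith

include hn haff in
lemma bb {f g : M → ℝ} (hf : ContMDiff IM 𝓘(ℝ, ℝ) (⊤ : ℕ∞) f) (hg : ContMDiff IM 𝓘(ℝ, ℝ) (⊤ : ℕ∞) g)
    (x : M) (v : Fin n → ℝ) :
    J.br (fun q => f q.1) (fun q => g q.1) (x, v)
      = g x * J.br (fun q => f q.1) 1 (x, v) - f x * J.br (fun q => g q.1) 1 (x, v) := by
  set i0 : Fin n := ⟨0, hn⟩ with hi0
  set e : Fin n → ℝ := Pi.single i0 1 with he
  have hz := congrFun (J.one_one sm_one)
  simp only [Pi.zero_apply] at hz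
  have hR : ∀ w : Fin n → ℝ,
      J.br (fun q => g q.1) 1 (x, w) = J.br (fun q => g q.1) 1 (x, 0) := by
    intro w
    have h1 := key hn J haff sm_one aff_one hg x w
    have ha1 := congrFun (J.antisymm (fun q => g q.1) 1 (sm_basic hg) sm_one)
    have e1 := ha1 (x, w); have e2 := ha1 (x, 0)
    simp only [Pi.neg_apply] at e1 e2
    rw [hz (x, w), hz (x, 0)] at h1
    simp only [mul_zero, sub_zero] at h1
    linarith
  have hP := fun w => key hn J haff (sm_basic hf) (aff_basic f) hg x w
  have hQ := fun w => key hn J haff (sm_coord i0) (aff_coord i0) hg x w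
  have hE := fun w => key hn J haff (sm_mul (sm_basic hf) (sm_coord i0))
    (aff_basic_mul f (aff_coord i0)) hg x w
  have hml := J.mul_left' (u := fun q : M × (Fin n → ℝ) => f q.1) (w := fun q => q.2 i0)
    (h := fun q => g q.1) (sm_basic hf) (sm_coord i0) (sm_basic hg)
    (sm_mul (sm_basic hf) (sm_coord i0))
  have hml1 := J.mul_left' (u := fun q : M × (Fin n → ℝ) => f q.1) (w := fun q => q.2 i0)
    (h := (1 : M × (Fin n → ℝ) → ℝ)) (sm_basic hf) (sm_coord i0) sm_one
    (sm_mul (sm_basic hf) (sm_coord i0))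
  have me := congrFun hml (x, e)
  have m0 := congrFun hml (x, 0)
  have ne' := congrFun hml1 (x, e)
  have n0 := congrFun hml1 (x, 0)
  simp only [Pi.add_apply, Pi.mul_apply, Pi.zero_apply, he, Pi.single_eq_same] at me m0 ne' n0
  rw [hz (x, e)] at ne'
  have hEe := hE e
  have hstar : J.br (fun q => f q.1) (fun q => g q.1) (x, e)
      - g x * J.br (fun q => f q.1) 1 (x, e)
      + f x * J.br (fun q => g q.1) 1 (x, e) = 0 := by
    linear_combination hEe - f x * (hQ e) - me + m0 + g x * ne' - g x * n0
  linear_combination (hP v) - (hP e) + hstar + f x * (hR v) - f x * (hR e)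

end Helpers


/-- an affine Jacobi bracket on the trivial bundle `M × ℝⁿ`, `n ≥ 1`,
induces a Lie algebroid structure on the bundle of fibrewise affine functionals:
(a) the affine functions are closed under the bracket (hence form a Lie algebra);
(b) there is an anchor `ρ⁺` with `ρ⁺(a)(f)∘π = {a, f∘π} − (f∘π)·{a,1}`, uniquely
determined, each `ρ⁺(a)` being an ℝ-linear derivation of `C^∞(M,ℝ)`;
(c) `ρ⁺` is `C^∞(M,ℝ)`-linear in `a`; (d) the Leibniz rule holds. -/
theorem stmt2
    {EM : Type*} [NormedAddCommGroup EM] [NormedSpace ℝ EM] [FiniteDimensional ℝ EM]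
    {HM : Type*} [TopologicalSpace HM] (IM : ModelWithCorners ℝ EM HM)
    (M : Type*) [TopologicalSpace M] [ChartedSpace HM M] [IsManifold IM (⊤ : ℕ∞) M]
    (n : ℕ) (hn : 1 ≤ n)
    (J : JacobiBracket (M × (Fin n → ℝ)) (SmoothBdl IM M n))
    (haff : ∀ a b, SmoothBdl IM M n a → SmoothBdl IM M n b →
      IsFibAffine a → IsFibAffine b → IsFibAffine (J.br a b)) :
    -- (a) closedness of affine functions under the bracket (together with the
    -- antisymmetry and Jacobi identity of `J`, a Lie algebra structure)
    (∀ a b, SmoothBdl IM M n a → SmoothBdl IM M n b → IsFibAffine a → IsFibAffine b →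
      SmoothBdl IM M n (J.br a b) ∧ IsFibAffine (J.br a b)) ∧
    -- the anchor map ρ⁺
    (∃ ρ : (M × (Fin n → ℝ) → ℝ) → (M → ℝ) → (M → ℝ),
      -- (b) defining property: ρ⁺(a)(f)∘π = {a, f∘π} − (f∘π)·{a,1}, with ρ⁺(a)(f) smooth
      (∀ a f, SmoothBdl IM M n a → IsFibAffine a → ContMDiff IM 𝓘(ℝ, ℝ) (⊤ : ℕ∞) f →
        ContMDiff IM 𝓘(ℝ, ℝ) (⊤ : ℕ∞) (ρ a f) ∧
        (fun p : M × (Fin n → ℝ) => ρ a f p.1)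
          = fun p => J.br a (fun q => f q.1) p - f p.1 * J.br a 1 p) ∧
      -- (b) uniqueness of ρ⁺(a)(f)
      (∀ a f g, SmoothBdl IM M n a → IsFibAffine a → ContMDiff IM 𝓘(ℝ, ℝ) (⊤ : ℕ∞) f →
        ((fun p : M × (Fin n → ℝ) => g p.1)
          = fun p => J.br a (fun q => f q.1) p - f p.1 * J.br a 1 p) →
        g = ρ a f) ∧
      -- (b) ρ⁺(a) is an ℝ-linear derivation of C^∞(M,ℝ)
      (∀ a, SmoothBdl IM M n a → IsFibAffine a →
        (∀ f g, ContMDiff IM 𝓘(ℝ, ℝ) (⊤ : ℕ∞) f → ContMDiff IM 𝓘(ℝ, ℝ) (⊤ : ℕ∞) g →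
          ρ a (f + g) = ρ a f + ρ a g ∧ ρ a (f * g) = ρ a f * g + f * ρ a g) ∧
        (∀ (c : ℝ) (f : M → ℝ), ContMDiff IM 𝓘(ℝ, ℝ) (⊤ : ℕ∞) f → ρ a (c • f) = c • ρ a f)) ∧
      -- (c) C^∞(M,ℝ)-linearity of ρ⁺ in a
      (∀ a b f g, SmoothBdl IM M n a → SmoothBdl IM M n b → IsFibAffine a → IsFibAffine b →
        ContMDiff IM 𝓘(ℝ, ℝ) (⊤ : ℕ∞) f → ContMDiff IM 𝓘(ℝ, ℝ) (⊤ : ℕ∞) g →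
        ρ ((fun p => f p.1) * a + b) g = f * ρ a g + ρ b g) ∧
      -- (d) Leibniz rule
      (∀ a b f, SmoothBdl IM M n a → SmoothBdl IM M n b → IsFibAffine a → IsFibAffine b →
        ContMDiff IM 𝓘(ℝ, ℝ) (⊤ : ℕ∞) f →
        J.br a ((fun p => f p.1) * b)
          = (fun p => f p.1) * J.br a b + (fun p => ρ a f p.1) * b)) := by
  classical
  refine ⟨fun a b ha hb haa hab => ⟨J.smooth_br a b ha hb, haff a b ha hb haa hab⟩, ?_⟩
  refine ⟨fun a f x => J.br a (fun q => f q.1) (x, 0) - f x * J.br a 1 (x, 0),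
    ?_, ?_, ?_, ?_, ?_⟩
  · -- (b1) smoothness + defining property
    intro a f ha haa hf
    refine ⟨?_, ?_⟩
    · exact ContMDiff.sub
        (ContMDiff.comp (J.smooth_br a _ ha (sm_basic hf))
          (contMDiff_id.prodMk contMDiff_const))
        (hf.mul (ContMDiff.comp (J.smooth_br a 1 ha sm_one)
          (contMDiff_id.prodMk contMDiff_const)))
    · funext p
      obtain ⟨x, v⟩ := p
      exact (key hn J haff ha haa hf x v).symm
  · -- (b2) uniqueness
    intro a f g ha haa hf hgg
    funext x
    exact congrFun hgg (x, 0)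
  · -- (b3) derivation
    intro a ha haa
    refine ⟨fun f g hf hg => ⟨?_, ?_⟩, ?_⟩
    · -- additivity
      funext x
      simp only [Pi.add_apply]
      have hfg : (fun q : M × (Fin n → ℝ) => f q.1 + g q.1)
          = (fun q => f q.1) + (fun q => g q.1) := rfl
      rw [hfg]
      have h1 := congrFun (J.add_right (f := a) ha (sm_basic hf) (sm_basic hg)
        (sm_add (sm_basic hf) (sm_basic hg))) (x, (0 : Fin n → ℝ))
      simp only [Pi.add_apply] at h1
      linear_combination h1
    · -- product rule
      funext x
      simp only [Pi.add_apply, Pi.mul_apply]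
      have hfg : (fun q : M × (Fin n → ℝ) => f q.1 * g q.1)
          = (fun q => f q.1) * (fun q => g q.1) := rfl
      rw [hfg]
      have h1 := congrFun (J.leibniz a (fun q => f q.1) (fun q => g q.1)
        ha (sm_basic hf) (sm_basic hg)) (x, (0 : Fin n → ℝ))
      simp only [Pi.add_apply, Pi.mul_apply, Pi.sub_apply] at h1
      linear_combination h1
    · -- scalar multiplication
      intro c f hf
      funext x
      simp only [Pi.smul_apply, smul_eq_mul]
      have hcf : (fun q : M × (Fin n → ℝ) => c * f q.1)
          = c • (fun q => f q.1) := rfl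
      rw [hcf]
      have h1 := congrFun (J.smul_right c ha (sm_basic hf)
        (sm_smul c (sm_basic hf))) (x, (0 : Fin n → ℝ))
      simp only [Pi.smul_apply, smul_eq_mul] at h1
      linear_combination h1
  · -- (c) C∞-linearity in a
    intro a b f g ha hb haa hab hf hg
    funext x
    have hadd := congrFun (J.add_left ((fun p => f p.1) * a) b (fun q => g q.1)
      (sm_mul (sm_basic hf) ha) hb (sm_basic hg)) (x, (0 : Fin n → ℝ))
    have hml := congrFun (J.mul_left' (u := fun p : M × (Fin n → ℝ) => f p.1) (w := a)
      (h := fun q => g q.1) (sm_basic hf) ha (sm_basic hg)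
      (sm_mul (sm_basic hf) ha)) (x, (0 : Fin n → ℝ))
    have hadd1 := congrFun (J.add_left ((fun p => f p.1) * a) b 1
      (sm_mul (sm_basic hf) ha) hb sm_one) (x, (0 : Fin n → ℝ))
    have hml1 := congrFun (J.mul_left' (u := fun p : M × (Fin n → ℝ) => f p.1) (w := a)
      (h := (1 : M × (Fin n → ℝ) → ℝ)) (sm_basic hf) ha sm_one
      (sm_mul (sm_basic hf) ha)) (x, (0 : Fin n → ℝ))
    have hz := congrFun (J.one_one sm_one) (x, (0 : Fin n → ℝ))
    have hbb := bb hn J haff hf hg x 0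
    simp only [Pi.add_apply, Pi.mul_apply, Pi.zero_apply] at hadd hml hadd1 hml1 hz ⊢
    linear_combination hadd + hml - g x * hadd1 - g x * hml1 + a (x, 0) * hbb
      - g x * f x * a (x, 0) * hz
  · -- (d) Leibniz rule
    intro a b f ha hb haa hab hf
    funext p
    obtain ⟨x, v⟩ := p
    have hl := congrFun (J.leibniz a (fun q => f q.1) b ha (sm_basic hf) hb) (x, v)
    have hk := key hn J haff ha haa hf x v
    simp only [Pi.add_apply, Pi.mul_apply, Pi.sub_apply] at hl ⊢
    linear_combination hl + b (x, v) * hk
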